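/- The maximum k-way normalized Newman–Girvan modularity of an edge-weighted graph G with Vol(V)=1 is at most the sum of the k−1 largest eigenvalues of the normalized modularity matrix M_D: M_k ≤ ∑_{i=1}^{k-1} λ_i. -/

import Mathlib

open Matrix BigOperators

lemma ortho_expand {n : ℕ} (u : Fin n → Fin n → ℝ)
    (horth : ∀ i j, (u i) ⬝ᵥ (u j) = if i = j then 1 else 0) (x : Fin n → ℝ) :
    x = ∑ i, (u i ⬝ᵥ x) • u i := by
  have hUU : (Matrix.of u) * (Matrix.of u)ᵀ = 1 := by
    ext i j
    simpa [Matrix.mul_apply, Matrix.one_apply, dotProduct] using horth i j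
  have hUtU : (Matrix.of u)ᵀ * (Matrix.of u) = 1 := mul_eq_one_comm.mp hUU
  funext j
  have h := congrArg (fun M : Matrix (Fin n) (Fin n) ℝ => M.mulVec x j) hUtU
  simp only [Matrix.mulVec, Matrix.mul_apply, dotProduct, Matrix.one_apply,
    Matrix.transpose_apply, Matrix.of_apply] at h
  simp only [Finset.sum_apply, Pi.smul_apply, smul_eq_mul, dotProduct]
  calc x j = ∑ l, (∑ i, u i j * u i l) * x l := by rw [h]; simp
    _ = ∑ i, (∑ l, u i l * x l) * u i j := by
        simp only [Finset.sum_mul, Finset.mul_sum]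
        rw [Finset.sum_comm]
        exact Finset.sum_congr rfl fun i _ => Finset.sum_congr rfl fun l _ => by ring

lemma parseval {n : ℕ} (u : Fin n → Fin n → ℝ)
    (horth : ∀ i j, (u i) ⬝ᵥ (u j) = if i = j then 1 else 0) (x : Fin n → ℝ) :
    x ⬝ᵥ x = ∑ i, (u i ⬝ᵥ x)^2 := by
  nth_rewrite 2 [ortho_expand u horth x]
  rw [dotProduct_sum]
  refine Finset.sum_congr rfl fun i _ => ?_
  rw [dotProduct_smul, smul_eq_mul, dotProduct_comm]
  ring

lemma quadform {n : ℕ} (M : Matrix (Fin n) (Fin n) ℝ) (lam : Fin n → ℝ)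
    (u : Fin n → Fin n → ℝ)
    (hlam : ∀ i, M.mulVec (u i) = lam i • u i)
    (horth : ∀ i j, (u i) ⬝ᵥ (u j) = if i = j then 1 else 0) (x : Fin n → ℝ) :
    x ⬝ᵥ M.mulVec x = ∑ i, lam i * (u i ⬝ᵥ x)^2 := by
  nth_rewrite 2 [ortho_expand u horth x]
  have : M.mulVec (∑ i, (u i ⬝ᵥ x) • u i) = ∑ i, (u i ⬝ᵥ x) • (lam i • u i) := by
    rw [show M.mulVec (∑ i, (u i ⬝ᵥ x) • u i) = ∑ i, M.mulVec ((u i ⬝ᵥ x) • u i) from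
      map_sum M.mulVecLin _ _]
    exact Finset.sum_congr rfl fun i _ => by
      rw [Matrix.mulVec_smul, hlam i]
  rw [this, dotProduct_sum]
  refine Finset.sum_congr rfl fun i _ => ?_
  rw [smul_smul, dotProduct_smul, smul_eq_mul, dotProduct_comm]
  ring

lemma bessel {n k : ℕ} (y : Fin k → Fin n → ℝ)
    (hyy : ∀ a b, y a ⬝ᵥ y b = if a = b then 1 else 0) (x : Fin n → ℝ) :
    ∑ a, (y a ⬝ᵥ x)^2 ≤ x ⬝ᵥ x := by
  set w : Fin n → ℝ := x - ∑ a, (y a ⬝ᵥ x) • y a with hw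
  have hnn : (0:ℝ) ≤ w ⬝ᵥ w := Finset.sum_nonneg fun i _ => mul_self_nonneg _
  have e1 : (∑ a, (y a ⬝ᵥ x) • y a) ⬝ᵥ x = ∑ a, (y a ⬝ᵥ x)^2 := by
    rw [sum_dotProduct]
    exact Finset.sum_congr rfl fun a _ => by rw [smul_dotProduct, smul_eq_mul, sq]
  have e2 : x ⬝ᵥ (∑ a, (y a ⬝ᵥ x) • y a) = ∑ a, (y a ⬝ᵥ x)^2 := by
    rw [dotProduct_sum]
    refine Finset.sum_congr rfl fun a _ => ?_
    rw [dotProduct_smul, smul_eq_mul, dotProduct_comm, sq]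
  have e3 : (∑ a, (y a ⬝ᵥ x) • y a) ⬝ᵥ (∑ a, (y a ⬝ᵥ x) • y a) = ∑ a, (y a ⬝ᵥ x)^2 := by
    rw [sum_dotProduct]
    refine Finset.sum_congr rfl fun a _ => ?_
    rw [smul_dotProduct, dotProduct_sum, smul_eq_mul]
    rw [Finset.sum_eq_single a]
    · rw [dotProduct_smul, hyy]; simp [sq]
    · intro b _ hb; rw [dotProduct_smul, hyy]; simp [Ne.symm hb]
    · simp
  have hcalc : w ⬝ᵥ w = x ⬝ᵥ x - ∑ a, (y a ⬝ᵥ x)^2 := by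
    rw [hw, sub_dotProduct, dotProduct_sub, dotProduct_sub, e1, e2, e3]
    ring
  linarith

lemma weighted_le_top {n m : ℕ} (hmn : m ≤ n) (lam : Fin n → ℝ)
    (hmono : ∀ i j : Fin n, i ≤ j → lam j ≤ lam i)
    (r : Fin n → ℝ) (h0 : ∀ i, 0 ≤ r i) (h1 : ∀ i, r i ≤ 1)
    (hsum : ∑ i, r i = (m:ℝ)) :
    ∑ i, lam i * r i ≤ ∑ a : Fin m, lam (Fin.castLE hmn a) := by
  rcases Nat.eq_zero_or_pos n with hn | hn
  · have hm : m = 0 := by omega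
    subst hm; subst hn; simp
  · set L : ℕ → ℝ := fun j => if h : j < n then lam ⟨j, h⟩ else 0 with hL
    set R : ℕ → ℝ := fun j => if h : j < n then r ⟨j, h⟩ else 0 with hR
    set c : ℝ := lam ⟨min m (n-1), by omega⟩ with hc
    have hLlam : ∀ (j : ℕ) (h : j < n), L j = lam ⟨j, h⟩ := fun j h => by simp [hL, h]
    have hRr : ∀ (j : ℕ) (h : j < n), R j = r ⟨j, h⟩ := fun j h => by simp [hR, h]
    have key1 : ∑ i, lam i * r i = ∑ j ∈ Finset.range n, L j * R j := by
      rw [← Fin.sum_univ_eq_sum_range (fun j => L j * R j) n]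
      exact Finset.sum_congr rfl fun i _ => by
        rw [hLlam i i.isLt, hRr i i.isLt]
    have key2 : (∑ a : Fin m, lam (Fin.castLE hmn a)) = ∑ j ∈ Finset.range m, L j := by
      rw [← Fin.sum_univ_eq_sum_range L m]
      exact Finset.sum_congr rfl fun a _ => by
        rw [hLlam a (lt_of_lt_of_le a.isLt hmn)]
        rfl
    have hRsum : ∑ j ∈ Finset.range n, R j = (m:ℝ) := by
      rw [← Fin.sum_univ_eq_sum_range R n, ← hsum]
      exact Finset.sum_congr rfl fun i _ => hRr i i.isLt
    have split : ∑ j ∈ Finset.range n, L j * R j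
        = ∑ j ∈ Finset.range n, (L j - c) * R j + c * ∑ j ∈ Finset.range n, R j := by
      rw [Finset.mul_sum, ← Finset.sum_add_distrib]
      exact Finset.sum_congr rfl fun j _ => by ring
    have hsplit : ∑ j ∈ Finset.Ico 0 m, ((L j - c) * R j)
        + ∑ j ∈ Finset.Ico m n, ((L j - c) * R j)
        = ∑ j ∈ Finset.Ico 0 n, ((L j - c) * R j) :=
      Finset.sum_Ico_consecutive _ (Nat.zero_le m) hmn
    have b1 : ∑ j ∈ Finset.range m, (L j - c) * R j ≤ ∑ j ∈ Finset.range m, (L j - c) := by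
      refine Finset.sum_le_sum fun j hj => ?_
      have hj' : j < m := Finset.mem_range.mp hj
      have hjn : j < n := lt_of_lt_of_le hj' hmn
      have hLc : c ≤ L j := by
        rw [hLlam j hjn, hc]
        exact hmono _ _ (by rw [Fin.mk_le_mk]; omega)
      have hRl : R j ≤ 1 := by rw [hRr j hjn]; exact h1 _
      have hR0 : 0 ≤ R j := by rw [hRr j hjn]; exact h0 _
      nlinarith
    have b2 : ∑ j ∈ Finset.Ico m n, (L j - c) * R j ≤ 0 := by
      refine Finset.sum_nonpos fun j hj => ?_
      obtain ⟨hjm, hjn⟩ := Finset.mem_Ico.mp hj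
      have hLc : L j ≤ c := by
        rw [hLlam j hjn, hc]
        exact hmono _ _ (by rw [Fin.mk_le_mk]; omega)
      have hR0 : 0 ≤ R j := by rw [hRr j hjn]; exact h0 _
      nlinarith
    have b3 : ∑ j ∈ Finset.range m, (L j - c) = ∑ j ∈ Finset.range m, L j - c * m := by
      rw [Finset.sum_sub_distrib]
      simp [mul_comm]
    have main : ∑ j ∈ Finset.range n, (L j - c) * R j ≤ ∑ j ∈ Finset.range m, (L j - c) := by
      have : ∑ j ∈ Finset.range n, (L j - c) * R j
          = ∑ j ∈ Finset.range m, (L j - c) * R j + ∑ j ∈ Finset.Ico m n, (L j - c) * R j := by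
        rw [Finset.range_eq_Ico, ← hsplit, ← Finset.range_eq_Ico]
      rw [this]
      linarith
    rw [key1, key2, split, hRsum]
    linarith


/-- The maximum k-way normalized Newman–Girvan modularity is at most the sum of
the k-1 largest eigenvalues of the normalized modularity matrix M_D. -/
theorem modularity_le_sum_top_eigenvalues {n k : ℕ} (hk : 1 ≤ k) (hkn : k - 1 ≤ n)
    (W : Matrix (Fin n) (Fin n) ℝ)
    (hsym : W.IsSymm) (hnn : ∀ i j, 0 ≤ W i j)
    (d : Fin n → ℝ) (hd : ∀ i, d i = ∑ j, W i j)
    (hdpos : ∀ i, 0 < d i) (hvol : ∑ i, d i = 1)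
    (MD : Matrix (Fin n) (Fin n) ℝ)
    (hMD : MD = (Matrix.of fun i j => W i j / (Real.sqrt (d i) * Real.sqrt (d j)))
      - vecMulVec (fun i => Real.sqrt (d i)) (fun i => Real.sqrt (d i)))
    -- eigenvalues of M_D, in non-increasing order
    (lam : Fin n → ℝ) (u : Fin n → Fin n → ℝ)
    (hlam : ∀ i, MD.mulVec (u i) = lam i • u i)
    (horth : ∀ i j, (u i) ⬝ᵥ (u j) = if i = j then 1 else 0)
    (hmono : ∀ i j : Fin n, i ≤ j → lam j ≤ lam i) :
    ∀ (P : Fin n → Fin k), (∀ a : Fin k, ∃ j, P j = a) →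
      (∑ a : Fin k,
        (1 / ∑ j ∈ Finset.univ.filter (fun j => P j = a), d j) *
          ∑ i ∈ Finset.univ.filter (fun i => P i = a),
            ∑ j ∈ Finset.univ.filter (fun j => P j = a), (W i j - d i * d j))
      ≤ ∑ a : Fin (k - 1), lam (Fin.castLE hkn a) := by
  intro P hP
  set Vol : Fin k → ℝ := fun a => ∑ j ∈ Finset.univ.filter (fun j => P j = a), d j with hVol
  have hVolpos : ∀ a, 0 < Vol a := by
    intro a
    obtain ⟨j, hj⟩ := hP a
    exact Finset.sum_pos' (fun i _ => (hdpos i).le)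
      ⟨j, Finset.mem_filter.mpr ⟨Finset.mem_univ j, hj⟩, hdpos j⟩
  set y : Fin k → Fin n → ℝ :=
    fun a i => if P i = a then Real.sqrt (d i) / Real.sqrt (Vol a) else 0 with hy
  set z : Fin n → ℝ := fun i => Real.sqrt (d i) with hz
  have hsd : ∀ i, Real.sqrt (d i) ≠ 0 := fun i => (Real.sqrt_pos.mpr (hdpos i)).ne'
  have hsV : ∀ a, Real.sqrt (Vol a) ≠ 0 := fun a => (Real.sqrt_pos.mpr (hVolpos a)).ne'
  -- orthonormality of y
  have hyy : ∀ a b, y a ⬝ᵥ y b = if a = b then 1 else 0 := by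
    intro a b
    by_cases hab : a = b
    · subst hab
      have : y a ⬝ᵥ y a = ∑ i ∈ Finset.univ.filter (fun i => P i = a), d i / Vol a := by
        rw [Finset.sum_filter]
        refine Finset.sum_congr rfl fun i _ => ?_
        by_cases h : P i = a
        · simp only [hy, if_pos h]
          rw [div_mul_div_comm, Real.mul_self_sqrt (hdpos i).le,
            Real.mul_self_sqrt (hVolpos a).le]
        · simp [hy, h]
      rw [this, ← Finset.sum_div]
      have hV : (∑ i ∈ Finset.univ.filter (fun i => P i = a), d i) = Vol a := rfl
      rw [hV, div_self (hVolpos a).ne']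
      simp
    · rw [if_neg hab]
      apply Finset.sum_eq_zero
      intro i _
      by_cases h : P i = a
      · have : P i ≠ b := h ▸ hab
        simp [hy, this]
      · simp [hy, h]
  -- quadratic form value on y a
  have hquad : ∀ a, y a ⬝ᵥ MD.mulVec (y a)
      = (1 / Vol a) * ∑ i ∈ Finset.univ.filter (fun i => P i = a),
          ∑ j ∈ Finset.univ.filter (fun j => P j = a), (W i j - d i * d j) := by
    intro a
    have expand : y a ⬝ᵥ MD.mulVec (y a) = ∑ i, ∑ j, y a i * MD i j * y a j := by
      simp only [dotProduct, Matrix.mulVec, dotProduct, Finset.mul_sum]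
      exact Finset.sum_congr rfl fun i _ => Finset.sum_congr rfl fun j _ => by ring
    rw [expand, Finset.mul_sum, Finset.sum_filter]
    refine Finset.sum_congr rfl fun i _ => ?_
    by_cases hi : P i = a
    · rw [if_pos hi, Finset.mul_sum, Finset.sum_filter]
      refine Finset.sum_congr rfl fun j _ => ?_
      by_cases hj : P j = a
      · rw [if_pos hj]
        simp only [hy, if_pos hi, if_pos hj, hMD, Matrix.sub_apply, Matrix.of_apply,
          Matrix.vecMulVec_apply, hz]
        have e1 : Real.sqrt (d i) * Real.sqrt (d i) = d i := Real.mul_self_sqrt (hdpos i).le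
        have e2 : Real.sqrt (d j) * Real.sqrt (d j) = d j := Real.mul_self_sqrt (hdpos j).le
        have e3 : Real.sqrt (Vol a) * Real.sqrt (Vol a) = Vol a :=
          Real.mul_self_sqrt (hVolpos a).le
        have emid1 : Real.sqrt (d i) * (W i j / (Real.sqrt (d i) * Real.sqrt (d j)))
            * Real.sqrt (d j) = W i j := by
          have hne : Real.sqrt (d i) * Real.sqrt (d j) ≠ 0 := mul_ne_zero (hsd i) (hsd j)
          calc Real.sqrt (d i) * (W i j / (Real.sqrt (d i) * Real.sqrt (d j)))
              * Real.sqrt (d j)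
              = W i j * ((Real.sqrt (d i) * Real.sqrt (d j))
                / (Real.sqrt (d i) * Real.sqrt (d j))) := by ring
            _ = W i j := by rw [div_self hne, mul_one]
        have emid2 : Real.sqrt (d i) * (Real.sqrt (d i) * Real.sqrt (d j))
            * Real.sqrt (d j) = d i * d j := by
          calc Real.sqrt (d i) * (Real.sqrt (d i) * Real.sqrt (d j)) * Real.sqrt (d j)
              = (Real.sqrt (d i) * Real.sqrt (d i)) * (Real.sqrt (d j) * Real.sqrt (d j)) := by
                ring
            _ = d i * d j := by rw [e1, e2]
        have emid : Real.sqrt (d i) * (W i j / (Real.sqrt (d i) * Real.sqrt (d j))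
            - Real.sqrt (d i) * Real.sqrt (d j)) * Real.sqrt (d j) = W i j - d i * d j := by
          rw [mul_sub, sub_mul, emid1, emid2]
        calc Real.sqrt (d i) / Real.sqrt (Vol a)
              * (W i j / (Real.sqrt (d i) * Real.sqrt (d j))
                - Real.sqrt (d i) * Real.sqrt (d j)) * (Real.sqrt (d j) / Real.sqrt (Vol a))
            = (Real.sqrt (d i) * (W i j / (Real.sqrt (d i) * Real.sqrt (d j))
                - Real.sqrt (d i) * Real.sqrt (d j)) * Real.sqrt (d j))
              / (Real.sqrt (Vol a) * Real.sqrt (Vol a)) := by ring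
          _ = (W i j - d i * d j) / Vol a := by rw [emid, e3]
          _ = 1 / Vol a * (W i j - d i * d j) := by ring
      · rw [if_neg hj]
        simp [hy, hj]
    · rw [if_neg hi]
      apply Finset.sum_eq_zero
      intro j _
      simp [hy, hi]
  -- MD annihilates z
  have hMDz : MD.mulVec z = 0 := by
    funext i
    simp only [Matrix.mulVec, dotProduct, hMD, Matrix.sub_apply, Matrix.of_apply,
      Matrix.vecMulVec_apply, Pi.zero_apply, hz]
    have key : ∀ j, (W i j / (Real.sqrt (d i) * Real.sqrt (d j))
          - Real.sqrt (d i) * Real.sqrt (d j)) * Real.sqrt (d j)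
        = W i j / Real.sqrt (d i) - Real.sqrt (d i) * d j := by
      intro j
      have e2 : Real.sqrt (d j) * Real.sqrt (d j) = d j := Real.mul_self_sqrt (hdpos j).le
      have k1 : W i j / (Real.sqrt (d i) * Real.sqrt (d j)) * Real.sqrt (d j)
          = W i j / Real.sqrt (d i) := by
        rw [div_mul_eq_mul_div, mul_div_mul_right _ _ (hsd j)]
      have k2 : Real.sqrt (d i) * Real.sqrt (d j) * Real.sqrt (d j)
          = Real.sqrt (d i) * d j := by rw [mul_assoc, e2]
      rw [sub_mul, k1, k2]
    rw [Finset.sum_congr rfl fun j _ => key j, Finset.sum_sub_distrib,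
      ← Finset.sum_div, ← Finset.mul_sum, hvol, ← hd i, mul_one, Real.div_sqrt, sub_self]
  -- z in terms of y
  have hzy : z = ∑ a, Real.sqrt (Vol a) • y a := by
    funext i
    simp only [hz, Finset.sum_apply, Pi.smul_apply, smul_eq_mul, hy, mul_ite, mul_zero]
    rw [Finset.sum_ite_eq Finset.univ (P i)
      (fun a => Real.sqrt (Vol a) * (Real.sqrt (d i) / Real.sqrt (Vol a)))]
    simp only [Finset.mem_univ, if_true]
    rw [mul_comm, div_mul_cancel₀ _ (hsV (P i))]
  -- volumes sum to 1
  have hVolsum : ∑ a, Vol a = 1 := by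
    calc ∑ a, Vol a = ∑ j, d j := Finset.sum_fiberwise Finset.univ P d
      _ = 1 := hvol
  have hzz : z ⬝ᵥ z = 1 := by
    simp only [dotProduct, hz]
    rw [Finset.sum_congr rfl fun i _ => Real.mul_self_sqrt (hdpos i).le, hvol]
  set t : Fin n → ℝ := fun i => ∑ a, (u i ⬝ᵥ y a)^2 with ht
  set s : Fin n → ℝ := fun i => (u i ⬝ᵥ z)^2 with hs
  have hLHS : (∑ a : Fin k,
        (1 / ∑ j ∈ Finset.univ.filter (fun j => P j = a), d j) *
          ∑ i ∈ Finset.univ.filter (fun i => P i = a),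
            ∑ j ∈ Finset.univ.filter (fun j => P j = a), (W i j - d i * d j))
      = ∑ i, lam i * t i := by
    have h1 : ∀ a : Fin k, (1 / Vol a) *
          (∑ i ∈ Finset.univ.filter (fun i => P i = a),
            ∑ j ∈ Finset.univ.filter (fun j => P j = a), (W i j - d i * d j))
        = ∑ i, lam i * (u i ⬝ᵥ y a)^2 := fun a => by
      rw [← hquad a, quadform MD lam u hlam horth]
    calc (∑ a : Fin k,
        (1 / ∑ j ∈ Finset.univ.filter (fun j => P j = a), d j) *
          ∑ i ∈ Finset.univ.filter (fun i => P i = a),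
            ∑ j ∈ Finset.univ.filter (fun j => P j = a), (W i j - d i * d j))
        = ∑ a : Fin k, ∑ i, lam i * (u i ⬝ᵥ y a)^2 :=
          Finset.sum_congr rfl fun a _ => h1 a
      _ = ∑ i, ∑ a : Fin k, lam i * (u i ⬝ᵥ y a)^2 := Finset.sum_comm
      _ = ∑ i, lam i * t i := Finset.sum_congr rfl fun i _ => by
          rw [ht, ← Finset.mul_sum]
  have hts : ∀ i, s i ≤ t i := by
    intro i
    have hdz : u i ⬝ᵥ z = ∑ a, Real.sqrt (Vol a) * (u i ⬝ᵥ y a) := by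
      rw [hzy, dotProduct_sum]
      exact Finset.sum_congr rfl fun a _ => by rw [dotProduct_smul, smul_eq_mul]
    have hcs := Finset.sum_mul_sq_le_sq_mul_sq Finset.univ
      (fun a => Real.sqrt (Vol a)) (fun a => u i ⬝ᵥ y a)
    have hv : ∑ a, (Real.sqrt (Vol a))^2 = 1 := by
      rw [Finset.sum_congr rfl fun a _ => Real.sq_sqrt (hVolpos a).le, hVolsum]
    calc s i = (∑ a, Real.sqrt (Vol a) * (u i ⬝ᵥ y a))^2 := by simp only [hs]; rw [hdz]
      _ ≤ (∑ a, (Real.sqrt (Vol a))^2) * ∑ a, (u i ⬝ᵥ y a)^2 := hcs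
      _ = t i := by rw [hv, one_mul, ht]
  have ht1 : ∀ i, t i ≤ 1 := by
    intro i
    have hb := bessel y hyy (u i)
    rw [horth i i, if_pos rfl] at hb
    calc t i = ∑ a, (y a ⬝ᵥ u i)^2 :=
        Finset.sum_congr rfl fun a _ => by rw [dotProduct_comm]
      _ ≤ 1 := hb
  have hs0 : ∀ i, 0 ≤ s i := fun i => sq_nonneg _
  have htsum : ∑ i, t i = (k:ℝ) := by
    calc ∑ i, t i = ∑ a : Fin k, ∑ i, (u i ⬝ᵥ y a)^2 := Finset.sum_comm
      _ = ∑ _a : Fin k, (1:ℝ) := Finset.sum_congr rfl fun a _ => by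
          rw [← parseval u horth (y a), hyy a a, if_pos rfl]
      _ = (k:ℝ) := by simp
  have hssum : ∑ i, s i = 1 := by
    calc ∑ i, s i = z ⬝ᵥ z := (parseval u horth z).symm
      _ = 1 := hzz
  have hlamssum : ∑ i, lam i * s i = 0 := by
    have hq := quadform MD lam u hlam horth z
    rw [hMDz, dotProduct_zero] at hq
    exact hq.symm
  rw [hLHS]
  have hkey : ∑ i, lam i * t i = ∑ i, lam i * (t i - s i) := by
    have h2 : ∑ i, lam i * (t i - s i) = ∑ i, lam i * t i - ∑ i, lam i * s i := by
      rw [← Finset.sum_sub_distrib]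
      exact Finset.sum_congr rfl fun i _ => by ring
    rw [h2, hlamssum, sub_zero]
  rw [hkey]
  apply weighted_le_top hkn lam hmono (fun i => t i - s i)
  · intro i; have := hts i; linarith
  · intro i; have := ht1 i; have := hs0 i; linarith
  · rw [Finset.sum_sub_distrib, htsum, hssum, Nat.cast_sub hk, Nat.cast_one]
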